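/- Let the underlying graph be a path on agents 1,…,n, with σ_0(n) = x and target agent I < n. Let (σ_0,…,σ_T) be a sequence of swaps whose last swap gives object x to agent I in exchange for an object z. Then every object whose initial holder lies strictly between the initial holder of z and agent n (the initial holder of x) is swapped with exactly one of the two objects z and x during the sequence. -/

import Mathlib

/-- The setting of the swap-dynamics model with `N` agents `0, 1, ..., N-1` and
`N` objects, object `j` being the object initially held by agent `j`.
Each agent has a preference list (a duplicate-free list of objects, most preferred
first), and the agents form a social network given by a simple graph. -/
structure SwapModel (N : ℕ) where
  /-- the preference list of each agent -/
  pref : Fin N → List (Fin N)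
  nodup : ∀ i, (pref i).Nodup
  /-- the underlying social network -/
  G : SimpleGraph (Fin N)

namespace SwapModel

variable {N : ℕ}

/-- Agent `i` prefers object `u` to object `v`: both appear on her preference list
and `u` appears (strictly) earlier. -/
def Prefers (M : SwapModel N) (i u v : Fin N) : Prop :=
  ∃ k l : ℕ, k < l ∧ (M.pref i)[k]? = some u ∧ (M.pref i)[l]? = some v

/-- An assignment: a bijection mapping every agent to an object on her list. -/
def IsAssignment (M : SwapModel N) (σ : Fin N → Fin N) : Prop :=
  Function.Bijective σ ∧ ∀ i, σ i ∈ M.pref i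

/-- `(σ 0, σ 1, …, σ t)` is a sequence of swaps: each next assignment arises from
the previous one by performing a swap between two adjacent agents, each of whom
prefers the object of the other agent. -/
def IsSwapSeq (M : SwapModel N) (t : ℕ) (σ : ℕ → Fin N → Fin N) : Prop :=
  M.IsAssignment (σ 0) ∧
    ∀ k, k < t → ∃ i j : Fin N, M.G.Adj i j ∧
      M.Prefers i (σ k j) (σ k i) ∧ M.Prefers j (σ k i) (σ k j) ∧
      σ (k + 1) = σ k ∘ Equiv.swap i j

end SwapModel

/-- A swap: agent `a1` gives object `o1` to agent `a2` and receives object `o2`;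
this records the swap `τ = {{a1, o1}, {a2, o2}}`. -/
structure Swap (N : ℕ) where
  a1 : Fin N
  o1 : Fin N
  a2 : Fin N
  o2 : Fin N

namespace SwapModel

variable {N : ℕ}

/-- The assignment `σ` admits the swap `τ`. -/
def Admitted (M : SwapModel N) (σ : Fin N → Fin N) (τ : Swap N) : Prop :=
  σ τ.a1 = τ.o1 ∧ σ τ.a2 = τ.o2 ∧ M.G.Adj τ.a1 τ.a2 ∧
    M.Prefers τ.a1 τ.o2 τ.o1 ∧ M.Prefers τ.a2 τ.o1 τ.o2

/-- The assignment obtained from `σ` by performing the swap `τ`. -/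
def applySwap (σ : Fin N → Fin N) (τ : Swap N) : Fin N → Fin N :=
  σ ∘ Equiv.swap τ.a1 τ.a2

/-- The assignment obtained from `σ` by performing a sequence of swaps. -/
def applySeq (σ : Fin N → Fin N) : List (Swap N) → (Fin N → Fin N)
  | [] => σ
  | τ :: φ => applySeq (applySwap σ τ) φ

/-- `φ` is a valid swap sequence for the start assignment `σ`. -/
def ValidSeq (M : SwapModel N) (σ : Fin N → Fin N) : List (Swap N) → Prop
  | [] => True
  | τ :: φ => M.Admitted σ τ ∧ M.ValidSeq (applySwap σ τ) φ

/-- Object `x` is reachable for agent `I` from the initial assignment `σ0`. -/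
def Reachable (M : SwapModel N) (σ0 : Fin N → Fin N) (I x : Fin N) : Prop :=
  ∃ φ : List (Swap N), M.ValidSeq σ0 φ ∧ applySeq σ0 φ I = x

end SwapModel

/-- The path graph on `N` agents: agents `i` and `i+1` are adjacent. -/
def pathGraph' (N : ℕ) : SimpleGraph (Fin N) where
  Adj i j := i.val + 1 = j.val ∨ j.val + 1 = i.val
  symm := ⟨by intro i j h; exact h.symm⟩
  loopless := ⟨by intro i h; rcases h with h | h <;> omega⟩

/-- Swap `τ` exchanges the objects `u` and `v`. -/
def Swap.exchanges {N : ℕ} (τ : Swap N) (u v : Fin N) : Prop :=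
  (τ.o1 = u ∧ τ.o2 = v) ∨ (τ.o1 = v ∧ τ.o2 = u)

/-- Swap `τ` takes place over the edge `{j, j+1}` of the path
(agents here being indexed by their `Fin` value). -/
def Swap.onEdge {N : ℕ} (τ : Swap N) (j : ℕ) : Prop :=
  (τ.a1.val = j ∧ τ.a2.val = j + 1) ∨ (τ.a2.val = j ∧ τ.a1.val = j + 1)

section Aux

namespace SwapModel

variable {N : ℕ}

/-! ### Preference order facts -/

lemma prefers_trans (M : SwapModel N) {i u v w : Fin N}
    (h1 : M.Prefers i u v) (h2 : M.Prefers i v w) : M.Prefers i u w := by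
  obtain ⟨k, l, hkl, hk, hl⟩ := h1
  obtain ⟨k', l', hkl', hk', hl'⟩ := h2
  have hlen : l < (M.pref i).length := (List.getElem?_eq_some_iff.mp hl).1
  have : l = k' := (List.getElem?_inj hlen (M.nodup i)).mp (hl.trans hk'.symm)
  exact ⟨k, l', by omega, hk, hl'⟩

lemma prefers_irrefl (M : SwapModel N) {i u : Fin N} : ¬ M.Prefers i u u := by
  rintro ⟨k, l, hkl, hk, hl⟩
  have hlen : k < (M.pref i).length := (List.getElem?_eq_some_iff.mp hk).1
  have : k = l := (List.getElem?_inj hlen (M.nodup i)).mp (hk.trans hl.symm)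
  omega

lemma exchanges_symm {τ : Swap N} {u v : Fin N} (h : τ.exchanges u v) : τ.exchanges v u := by
  rcases h with ⟨h1, h2⟩ | ⟨h1, h2⟩
  · exact Or.inr ⟨h1, h2⟩
  · exact Or.inl ⟨h1, h2⟩

/-! ### The assignment after `t` steps -/

lemma applySeq_append (σ : Fin N → Fin N) (φ ψ : List (Swap N)) :
    applySeq σ (φ ++ ψ) = applySeq (applySeq σ φ) ψ := by
  induction φ generalizing σ with
  | nil => rfl
  | cons τ φ ih => exact ih (applySwap σ τ)

/-- The assignment after `t` steps of the sequence `φ`. -/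
def stepA (σ0 : Fin N → Fin N) (φ : List (Swap N)) (t : ℕ) : Fin N → Fin N :=
  applySeq σ0 (φ.take t)

lemma stepA_zero (σ0 : Fin N → Fin N) (φ : List (Swap N)) : stepA σ0 φ 0 = σ0 := rfl

lemma stepA_succ (σ0 : Fin N → Fin N) {φ : List (Swap N)} {t : ℕ} (ht : t < φ.length) :
    stepA σ0 φ (t+1) = fun i => stepA σ0 φ t (Equiv.swap (φ[t]).a1 (φ[t]).a2 i) := by
  unfold stepA
  rw [List.take_succ, List.getElem?_eq_getElem ht, Option.toList_some, applySeq_append]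
  rfl

lemma stepA_stable (σ0 : Fin N → Fin N) {φ : List (Swap N)} {t : ℕ} (ht : φ.length ≤ t) :
    stepA σ0 φ t = stepA σ0 φ φ.length := by
  unfold stepA
  rw [List.take_of_length_le ht, List.take_of_length_le le_rfl]

lemma valid_admitted (M : SwapModel N) (σ0 : Fin N → Fin N) (φ : List (Swap N))
    (hval : M.ValidSeq σ0 φ) : ∀ t (ht : t < φ.length), M.Admitted (stepA σ0 φ t) φ[t] := by
  induction φ generalizing σ0 with
  | nil => intro t ht; simp at ht
  | cons τ ψ ih =>
    intro t ht
    cases t with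
    | zero => exact hval.1
    | succ t =>
      have h2 := ih (applySwap σ0 τ) hval.2 t (by simpa using ht)
      simpa only [stepA, List.take_succ_cons, applySeq, List.getElem_cons_succ] using h2

lemma stepA_bijective {σ0 : Fin N → Fin N} (hb : Function.Bijective σ0)
    (φ : List (Swap N)) (t : ℕ) : Function.Bijective (stepA σ0 φ t) := by
  unfold stepA
  generalize φ.take t = ψ
  induction ψ generalizing σ0 with
  | nil => exact hb
  | cons τ ψ ih => exact ih (hb.comp (Equiv.bijective _))

/-! ### Positions of objects -/

/-- The position (the agent holding it) of object `o` after `t` steps. -/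
noncomputable def posAt (σ0 : Fin (N+1) → Fin (N+1)) (φ : List (Swap (N+1))) (t : ℕ)
    (o : Fin (N+1)) : Fin (N+1) :=
  Function.invFun (stepA σ0 φ t) o

variable {σ0 : Fin (N+1) → Fin (N+1)} {φ : List (Swap (N+1))}

lemma posAt_spec (hb : Function.Bijective σ0) (t : ℕ) (o : Fin (N+1)) :
    stepA σ0 φ t (posAt σ0 φ t o) = o :=
  Function.rightInverse_invFun (stepA_bijective hb φ t).2 o

lemma posAt_eq (hb : Function.Bijective σ0) {t : ℕ} {i o : Fin (N+1)}
    (h : stepA σ0 φ t i = o) : posAt σ0 φ t o = i :=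
  (stepA_bijective hb φ t).1 (by rw [posAt_spec hb, h])

lemma posAt_inj (hb : Function.Bijective σ0) {t : ℕ} {u v : Fin (N+1)}
    (h : posAt σ0 φ t u = posAt σ0 φ t v) : u = v := by
  have h1 := posAt_spec (φ := φ) hb t u
  have h2 := posAt_spec (φ := φ) hb t v
  rw [← h1, ← h2, h]

lemma posAt_step (hb : Function.Bijective σ0) {t : ℕ} (ht : t < φ.length) (o : Fin (N+1)) :
    posAt σ0 φ (t+1) o = Equiv.swap (φ[t]).a1 (φ[t]).a2 (posAt σ0 φ t o) := by
  apply posAt_eq hb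
  rw [stepA_succ σ0 ht]
  simp only [Equiv.swap_apply_self]
  exact posAt_spec hb t o

lemma posAt_stable (hb : Function.Bijective σ0) {t : ℕ} (ht : φ.length ≤ t) (o : Fin (N+1)) :
    posAt σ0 φ (t+1) o = posAt σ0 φ t o := by
  unfold posAt
  rw [stepA_stable σ0 ht, stepA_stable σ0 (le_trans ht (Nat.le_succ t))]

lemma swap_val_cases (hb : Function.Bijective σ0) {t : ℕ} (ht : t < φ.length) (o : Fin (N+1)) :
    (posAt σ0 φ t o = (φ[t]).a1 ∧ posAt σ0 φ (t+1) o = (φ[t]).a2) ∨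
    (posAt σ0 φ t o = (φ[t]).a2 ∧ posAt σ0 φ (t+1) o = (φ[t]).a1) ∨
    (posAt σ0 φ t o ≠ (φ[t]).a1 ∧ posAt σ0 φ t o ≠ (φ[t]).a2 ∧
      posAt σ0 φ (t+1) o = posAt σ0 φ t o) := by
  have hs := posAt_step hb ht o
  rcases eq_or_ne (posAt σ0 φ t o) (φ[t]).a1 with h1 | h1
  · exact Or.inl ⟨h1, by rw [hs, h1, Equiv.swap_apply_left]⟩
  rcases eq_or_ne (posAt σ0 φ t o) (φ[t]).a2 with h2 | h2
  · exact Or.inr (Or.inl ⟨h2, by rw [hs, h2, Equiv.swap_apply_right]⟩)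
  · exact Or.inr (Or.inr ⟨h1, h2, by rw [hs, Equiv.swap_apply_of_ne_of_ne h1 h2]⟩)


/-! ### Discrete intermediate value theorem -/

lemma ivt_up (w : ℕ → ℕ) (hstep : ∀ t, w (t+1) ≤ w t + 1) {a c : ℕ} (h1 : w a ≤ c) :
    ∀ b, a ≤ b → c ≤ w b → ∃ s, a ≤ s ∧ s ≤ b ∧ w s = c := by
  intro b hab
  induction b, hab using Nat.le_induction with
  | base => intro h2; exact ⟨a, le_rfl, le_rfl, le_antisymm h1 h2⟩
  | succ b hab ih =>
    intro h2
    by_cases hc : c ≤ w b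
    · obtain ⟨s, hs1, hs2, hs3⟩ := ih hc
      exact ⟨s, hs1, hs2.trans (Nat.le_succ b), hs3⟩
    · exact ⟨b+1, by omega, le_rfl, by have := hstep b; omega⟩

lemma ivt_down (w : ℕ → ℕ) (hstep : ∀ t, w t ≤ w (t+1) + 1) {a c : ℕ} (h1 : c ≤ w a) :
    ∀ b, a ≤ b → w b ≤ c → ∃ s, a ≤ s ∧ s ≤ b ∧ w s = c := by
  intro b hab
  induction b, hab using Nat.le_induction with
  | base => intro h2; exact ⟨a, le_rfl, le_rfl, le_antisymm h2 h1⟩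
  | succ b hab ih =>
    intro h2
    by_cases hc : w b ≤ c
    · obtain ⟨s, hs1, hs2, hs3⟩ := ih hc
      exact ⟨s, hs1, hs2.trans (Nat.le_succ b), hs3⟩
    · exact ⟨b+1, by omega, le_rfl, by have := hstep b; omega⟩

/-! ### Order dynamics -/

lemma adj_vals {M : SwapModel (N+1)} (hG : M.G = pathGraph' (N+1)) {a b : Fin (N+1)}
    (h : M.G.Adj a b) : a.val + 1 = b.val ∨ b.val + 1 = a.val := by
  rw [hG] at h; exact h

lemma step_order (M : SwapModel (N+1)) (hG : M.G = pathGraph' (N+1))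
    (hb : Function.Bijective σ0) (hval : M.ValidSeq σ0 φ) {u v : Fin (N+1)} (huv : u ≠ v)
    {t : ℕ} (ht : t < φ.length) (hne : ¬ (φ[t]).exchanges u v) :
    ((posAt σ0 φ (t+1) u).val < (posAt σ0 φ (t+1) v).val ↔
      (posAt σ0 φ t u).val < (posAt σ0 φ t v).val) := by
  have adm := valid_admitted M σ0 φ hval t ht
  have h1 : posAt σ0 φ t (φ[t]).o1 = (φ[t]).a1 := posAt_eq hb adm.1
  have h2 : posAt σ0 φ t (φ[t]).o2 = (φ[t]).a2 := posAt_eq hb adm.2.1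
  have hadj := adj_vals hG adm.2.2.1
  have hcu := swap_val_cases hb ht u
  have hcv := swap_val_cases hb ht v
  have hx1 : ¬ (posAt σ0 φ t u = (φ[t]).a1 ∧ posAt σ0 φ t v = (φ[t]).a2) := by
    rintro ⟨hu, hv⟩
    exact hne (Or.inl ⟨posAt_inj hb (h1.trans hu.symm), posAt_inj hb (h2.trans hv.symm)⟩)
  have hx2 : ¬ (posAt σ0 φ t u = (φ[t]).a2 ∧ posAt σ0 φ t v = (φ[t]).a1) := by
    rintro ⟨hu, hv⟩
    exact hne (Or.inr ⟨posAt_inj hb (h1.trans hv.symm), posAt_inj hb (h2.trans hu.symm)⟩)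
  have hpuv : posAt σ0 φ t u ≠ posAt σ0 φ t v := fun h => huv (posAt_inj hb h)
  simp only [ne_eq, Fin.ext_iff, not_and] at hcu hcv hx1 hx2 hpuv
  omega

lemma step_exch (M : SwapModel (N+1)) (hG : M.G = pathGraph' (N+1))
    (hb : Function.Bijective σ0) (hval : M.ValidSeq σ0 φ) {u v : Fin (N+1)}
    {t : ℕ} (ht : t < φ.length) (he : (φ[t]).exchanges u v) :
    posAt σ0 φ (t+1) u = posAt σ0 φ t v ∧ posAt σ0 φ (t+1) v = posAt σ0 φ t u ∧
      ((posAt σ0 φ t u).val + 1 = (posAt σ0 φ t v).val ∨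
       (posAt σ0 φ t v).val + 1 = (posAt σ0 φ t u).val) := by
  have adm := valid_admitted M σ0 φ hval t ht
  have h1 : posAt σ0 φ t (φ[t]).o1 = (φ[t]).a1 := posAt_eq hb adm.1
  have h2 : posAt σ0 φ t (φ[t]).o2 = (φ[t]).a2 := posAt_eq hb adm.2.1
  have hadj := adj_vals hG adm.2.2.1
  rcases he with ⟨hu, hv⟩ | ⟨hv, hu⟩
  · subst hu; subst hv
    refine ⟨?_, ?_, by rw [h1, h2]; exact hadj⟩
    · rw [posAt_step hb ht, h1, Equiv.swap_apply_left, h2]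
    · rw [posAt_step hb ht, h2, Equiv.swap_apply_right, h1]
  · subst hu; subst hv
    refine ⟨?_, ?_, by rw [h1, h2]; omega⟩
    · rw [posAt_step hb ht, h2, Equiv.swap_apply_right, h1]
    · rw [posAt_step hb ht, h1, Equiv.swap_apply_left, h2]

lemma order_const (M : SwapModel (N+1)) (hG : M.G = pathGraph' (N+1))
    (hb : Function.Bijective σ0) (hval : M.ValidSeq σ0 φ) {u v : Fin (N+1)} (huv : u ≠ v)
    (s : ℕ) : ∀ d : ℕ,
    (∀ k, s ≤ k → k < s + d → ∀ (hk : k < φ.length), ¬ (φ[k]).exchanges u v) →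
    ((posAt σ0 φ (s+d) u).val < (posAt σ0 φ (s+d) v).val ↔
      (posAt σ0 φ s u).val < (posAt σ0 φ s v).val) := by
  intro d
  induction d with
  | zero => intro _; exact Iff.rfl
  | succ d ih =>
    intro h
    have hprev := ih (fun k h1 h2 hk => h k h1 (by omega) hk)
    rw [← hprev]
    show ((posAt σ0 φ ((s+d)+1) u).val < (posAt σ0 φ ((s+d)+1) v).val ↔ _)
    by_cases hlt : s + d < φ.length
    · exact step_order M hG hb hval huv hlt (h (s+d) (by omega) (by omega) hlt)
    · rw [posAt_stable hb (by omega), posAt_stable hb (by omega)]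

lemma pos_step_bound (M : SwapModel (N+1)) (hG : M.G = pathGraph' (N+1))
    (hb : Function.Bijective σ0) (hval : M.ValidSeq σ0 φ) (o : Fin (N+1)) (t : ℕ) :
    (posAt σ0 φ (t+1) o).val ≤ (posAt σ0 φ t o).val + 1 ∧
      (posAt σ0 φ t o).val ≤ (posAt σ0 φ (t+1) o).val + 1 := by
  by_cases hlt : t < φ.length
  · have adm := valid_admitted M σ0 φ hval t hlt
    have hadj := adj_vals hG adm.2.2.1
    have hc := swap_val_cases hb hlt o
    simp only [ne_eq, Fin.ext_iff] at hc
    omega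
  · rw [posAt_stable hb (by omega)]; omega

/-! ### Improvement of holdings and the interval property -/

lemma improve (M : SwapModel (N+1)) (hval : M.ValidSeq σ0 φ) (i : Fin (N+1))
    {s t : ℕ} (hst : s ≤ t) :
    stepA σ0 φ s i = stepA σ0 φ t i ∨ M.Prefers i (stepA σ0 φ t i) (stepA σ0 φ s i) := by
  induction t, hst using Nat.le_induction with
  | base => exact Or.inl rfl
  | succ t hst ih =>
    have hstep : stepA σ0 φ t i = stepA σ0 φ (t+1) i ∨
        M.Prefers i (stepA σ0 φ (t+1) i) (stepA σ0 φ t i) := by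
      by_cases hlt : t < φ.length
      · have adm := valid_admitted M σ0 φ hval t hlt
        have ha12 : (φ[t]).a1 ≠ (φ[t]).a2 := M.G.ne_of_adj adm.2.2.1
        rw [stepA_succ σ0 hlt]
        rcases eq_or_ne i (φ[t]).a1 with rfl | hi1
        · right
          simp only [Equiv.swap_apply_left]
          rw [adm.2.1, adm.1]
          exact adm.2.2.2.1
        rcases eq_or_ne i (φ[t]).a2 with rfl | hi2
        · right
          simp only [Equiv.swap_apply_right]
          rw [adm.1, adm.2.1]
          exact adm.2.2.2.2
        · left
          simp only [Equiv.swap_apply_of_ne_of_ne hi1 hi2]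
      · left
        rw [stepA_stable σ0 (show φ.length ≤ t by omega),
          stepA_stable σ0 (show φ.length ≤ t + 1 by omega)]
    rcases ih with heq | hpref
    · rw [heq]; exact hstep
    · rcases hstep with heq2 | hpref2
      · rw [← heq2]; exact Or.inr hpref
      · exact Or.inr (prefers_trans M hpref2 hpref)

lemma pos_interval (M : SwapModel (N+1)) (hb : Function.Bijective σ0)
    (hval : M.ValidSeq σ0 φ) {o : Fin (N+1)} {t1 t2 t3 : ℕ} (h12 : t1 ≤ t2) (h23 : t2 ≤ t3)
    (h : posAt σ0 φ t1 o = posAt σ0 φ t3 o) : posAt σ0 φ t2 o = posAt σ0 φ t1 o := by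
  have e1 : stepA σ0 φ t1 (posAt σ0 φ t1 o) = o := posAt_spec hb t1 o
  have e3 : stepA σ0 φ t3 (posAt σ0 φ t1 o) = o := by rw [h]; exact posAt_spec hb t3 o
  suffices hsuf : stepA σ0 φ t2 (posAt σ0 φ t1 o) = o by
    rw [posAt_eq hb hsuf]
  rcases improve M hval (posAt σ0 φ t1 o) h12 with h' | h'
  · rw [← h', e1]
  · rcases improve M hval (posAt σ0 φ t1 o) h23 with h'' | h''
    · rw [h'', e3]
    · exfalso
      rw [e3] at h''
      rw [e1] at h'
      exact prefers_irrefl M (prefers_trans M h'' h')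


/-! ### Each pair of objects is exchanged at most once -/

lemma exch_prefers (M : SwapModel (N+1)) {σt : Fin (N+1) → Fin (N+1)} {τ : Swap (N+1)}
    (adm : M.Admitted σt τ) (hinj : Function.Injective σt) {a b k : Fin (N+1)}
    (he : τ.exchanges a b) (hk : σt k = a) : M.Prefers k b a := by
  rcases he with ⟨h1, h2⟩ | ⟨h1, h2⟩
  · have hka : k = τ.a1 := hinj (by rw [hk, adm.1, h1])
    subst hka
    have := adm.2.2.2.1
    rwa [h1, h2] at this
  · have hka : k = τ.a2 := hinj (by rw [hk, adm.2.1, h2])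
    subst hka
    have := adm.2.2.2.2
    rwa [h1, h2] at this

lemma no_second_cross (M : SwapModel (N+1)) (hG : M.G = pathGraph' (N+1))
    (hb : Function.Bijective σ0) (hval : M.ValidSeq σ0 φ) {u v : Fin (N+1)} (huv : u ≠ v)
    {t1 t2 : ℕ} (h12 : t1 < t2) (ht1 : t1 < φ.length) (ht2 : t2 < φ.length)
    (he1 : (φ[t1]).exchanges u v) (he2 : (φ[t2]).exchanges u v)
    (hbet : ∀ k, t1 < k → k < t2 → ∀ (hk : k < φ.length), ¬ (φ[k]).exchanges u v)
    (hord : (posAt σ0 φ t1 u).val < (posAt σ0 φ t1 v).val) : False := by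
  obtain ⟨e1u, e1v, hadj1⟩ := step_exch M hG hb hval ht1 he1
  obtain ⟨e2u, e2v, hadj2⟩ := step_exch M hG hb hval ht2 he2
  have hp : (posAt σ0 φ t1 v).val = (posAt σ0 φ t1 u).val + 1 := by omega
  have horder : ∀ s, t1 + 1 ≤ s → s ≤ t2 →
      (posAt σ0 φ s v).val < (posAt σ0 φ s u).val := by
    intro s hs1 hs2
    have hno : ∀ k, t1 + 1 ≤ k → k < (t1+1) + (s - (t1+1)) → ∀ (hk : k < φ.length),
        ¬ (φ[k]).exchanges v u :=
      fun k hk1 hk2 hk3 hex => hbet k (by omega) (by omega) hk3 (exchanges_symm hex)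
    have hc := order_const M hG hb hval (u := v) (v := u) huv.symm (t1+1) (s - (t1+1)) hno
    rw [show (t1+1) + (s - (t1+1)) = s by omega, e1u, e1v] at hc
    exact hc.mpr (by omega)
  have hq := horder t2 (by omega) le_rfl
  have hqval : (posAt σ0 φ t2 u).val = (posAt σ0 φ t2 v).val + 1 := by omega
  rcases lt_trichotomy (posAt σ0 φ t2 v).val (posAt σ0 φ t1 u).val with hlt | heq | hgt
  · -- q < p : the object u comes back to position p
    obtain ⟨s, hs1, hs2, hs3⟩ := ivt_down (fun s => (posAt σ0 φ s u).val)
      (fun t => (pos_step_bound M hG hb hval u t).2)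
      (a := t1+1) (c := (posAt σ0 φ t1 u).val)
      (show (posAt σ0 φ t1 u).val ≤ (posAt σ0 φ (t1+1) u).val by rw [e1u]; omega)
      t2 (by omega)
      (show (posAt σ0 φ t2 u).val ≤ (posAt σ0 φ t1 u).val by omega)
    have hs3' : (posAt σ0 φ s u).val = (posAt σ0 φ t1 u).val := hs3
    have hfin : posAt σ0 φ s u = posAt σ0 φ t1 u := Fin.ext (by omega)
    have hint := pos_interval M hb hval (t1 := t1) (t2 := t1 + 1) (t3 := s)
      (by omega) (by omega) hfin.symm
    rw [e1u] at hint
    have := congrArg Fin.val hint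
    omega
  · -- q = p : same two agents, preference contradiction
    have hfin : posAt σ0 φ t2 v = posAt σ0 φ t1 u := Fin.ext heq
    have hk1 : stepA σ0 φ t1 (posAt σ0 φ t1 u) = u := posAt_spec hb t1 u
    have hk2 : stepA σ0 φ t2 (posAt σ0 φ t1 u) = v := by
      rw [← hfin]; exact posAt_spec hb t2 v
    have hp1 : M.Prefers (posAt σ0 φ t1 u) v u :=
      exch_prefers M (valid_admitted M σ0 φ hval t1 ht1) (stepA_bijective hb φ t1).1 he1 hk1
    have hp2 : M.Prefers (posAt σ0 φ t1 u) u v :=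
      exch_prefers M (valid_admitted M σ0 φ hval t2 ht2) (stepA_bijective hb φ t2).1
        (exchanges_symm he2) hk2
    exact prefers_irrefl M (prefers_trans M hp1 hp2)
  · -- q > p : the object v comes back to position p+1
    obtain ⟨s, hs1, hs2, hs3⟩ := ivt_up (fun s => (posAt σ0 φ s v).val)
      (fun t => (pos_step_bound M hG hb hval v t).1)
      (a := t1+1) (c := (posAt σ0 φ t1 u).val + 1)
      (show (posAt σ0 φ (t1+1) v).val ≤ (posAt σ0 φ t1 u).val + 1 by rw [e1v]; omega)
      t2 (by omega)
      (show (posAt σ0 φ t1 u).val + 1 ≤ (posAt σ0 φ t2 v).val by omega)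
    have hs3' : (posAt σ0 φ s v).val = (posAt σ0 φ t1 u).val + 1 := hs3
    have hfin : posAt σ0 φ s v = posAt σ0 φ t1 v := Fin.ext (by omega)
    have hint := pos_interval M hb hval (t1 := t1) (t2 := t1 + 1) (t3 := s)
      (by omega) (by omega) hfin.symm
    rw [e1v] at hint
    have := congrArg Fin.val hint
    omega

lemma at_most_once (M : SwapModel (N+1)) (hG : M.G = pathGraph' (N+1))
    (hb : Function.Bijective σ0) (hval : M.ValidSeq σ0 φ) {u v : Fin (N+1)} (huv : u ≠ v)
    {t1 t2 : ℕ} (h12 : t1 < t2) (ht1 : t1 < φ.length) (ht2 : t2 < φ.length)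
    (he1 : (φ[t1]).exchanges u v) (he2 : (φ[t2]).exchanges u v) : False := by
  classical
  have hex : ∃ t, t1 < t ∧ ∃ h : t < φ.length, (φ[t]).exchanges u v := ⟨t2, h12, ht2, he2⟩
  obtain ⟨h12', ht2', he2'⟩ := Nat.find_spec hex
  have hbet : ∀ k, t1 < k → k < Nat.find hex → ∀ (hk : k < φ.length),
      ¬ (φ[k]).exchanges u v := by
    intro k hk1 hk2 hk3 hexk
    exact Nat.find_min hex hk2 ⟨hk1, hk3, hexk⟩
  have hne : (posAt σ0 φ t1 u).val ≠ (posAt σ0 φ t1 v).val :=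
    fun h => huv (posAt_inj hb (Fin.ext h))
  rcases Nat.lt_or_ge (posAt σ0 φ t1 u).val (posAt σ0 φ t1 v).val with h | h
  · exact no_second_cross M hG hb hval huv h12' ht1 ht2' he1 he2' hbet h
  · exact no_second_cross M hG hb hval huv.symm h12' ht1 ht2' (exchanges_symm he1)
      (exchanges_symm he2') (fun k a b c hx => hbet k a b c (exchanges_symm hx)) (by omega)

/-! ### An exchange happens iff the relative order flips -/

lemma flip_iff (M : SwapModel (N+1)) (hG : M.G = pathGraph' (N+1))
    (hb : Function.Bijective σ0) (hval : M.ValidSeq σ0 φ) {u v : Fin (N+1)} (huv : u ≠ v)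
    (hlen : 0 < φ.length)
    (hlast : ∀ (h : φ.length - 1 < φ.length), ¬ (φ[φ.length - 1]).exchanges u v) :
    ((∃ τ ∈ φ, τ.exchanges u v) ↔
      ¬ (((posAt σ0 φ (φ.length - 1) u).val < (posAt σ0 φ (φ.length - 1) v).val) ↔
        ((posAt σ0 φ 0 u).val < (posAt σ0 φ 0 v).val))) := by
  constructor
  · rintro ⟨τ, hmem, hex⟩
    obtain ⟨t, ht, rfl⟩ := List.mem_iff_getElem.mp hmem
    have htne : t ≠ φ.length - 1 := by
      intro h; subst h; exact hlast ht hex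
    have ht' : t < φ.length - 1 := by omega
    have huniq : ∀ k, k ≠ t → ∀ (hk : k < φ.length), ¬ (φ[k]).exchanges u v := by
      intro k hkt hk hexk
      rcases Nat.lt_or_ge k t with h | h
      · exact at_most_once M hG hb hval huv h hk ht hexk hex
      · exact at_most_once M hG hb hval huv (show t < k by omega) ht hk hex hexk
    have c1 := order_const M hG hb hval huv 0 t
      (fun k hk1 hk2 hk3 => huniq k (by omega) hk3)
    rw [Nat.zero_add] at c1
    obtain ⟨e1, e2, hadj⟩ := step_exch M hG hb hval ht hex
    have hne : (posAt σ0 φ t u).val ≠ (posAt σ0 φ t v).val :=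
      fun h => huv (posAt_inj hb (Fin.ext h))
    have c2 := order_const M hG hb hval huv (t+1) (φ.length - 1 - (t+1))
      (fun k hk1 hk2 hk3 => huniq k (by omega) hk3)
    rw [show (t+1) + (φ.length - 1 - (t+1)) = φ.length - 1 by omega] at c2
    have ev1 : (posAt σ0 φ (t+1) u).val = (posAt σ0 φ t v).val := by rw [e1]
    have ev2 : (posAt σ0 φ (t+1) v).val = (posAt σ0 φ t u).val := by rw [e2]
    omega
  · intro hRHS
    by_contra hno
    push_neg at hno
    have c := order_const M hG hb hval huv 0 (φ.length - 1)
      (fun k hk1 hk2 hk3 => hno (φ[k]) (List.getElem_mem hk3))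
    rw [Nat.zero_add] at c
    exact hRHS c

end SwapModel

end Aux
/-- The underlying graph is the path on agents `0, 1, …, N`, the
target object `x` is initially held by the last agent, and the target agent `I` is not
the last agent.  Let `(σ0, …, σT)` be a sequence of swaps whose last swap gives object
`x` to agent `I` in exchange for an object `z`.  Then every object `u` whose initial
holder lies strictly between the initial holder of `z` and the last agent (the initial
holder of `x`) is swapped with exactly one of the two objects `z` and `x` during the
sequence. -/
theorem statement11 (N : ℕ) (M : SwapModel (N + 1)) (hG : M.G = pathGraph' (N + 1))
    (σ0 : Fin (N + 1) → Fin (N + 1)) (hσ0 : M.IsAssignment σ0)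
    (x : Fin (N + 1)) (hx : σ0 (Fin.last N) = x)
    (I : Fin (N + 1)) (hI : I < Fin.last N)
    (z : Fin (N + 1)) (φ₀ : List (Swap (N + 1))) (τl : Swap (N + 1))
    (hvalid : M.ValidSeq σ0 (φ₀ ++ [τl]))
    (hτl : (τl.a1 = I ∧ τl.o1 = z ∧ τl.o2 = x) ∨
           (τl.a2 = I ∧ τl.o2 = z ∧ τl.o1 = x)) :
    ∀ (u : Fin (N + 1)) (az au : Fin (N + 1)), σ0 az = z → σ0 au = u →
      az < au → au < Fin.last N →
      Xor' (∃ τ ∈ φ₀ ++ [τl], τ.exchanges u z) (∃ τ ∈ φ₀ ++ [τl], τ.exchanges u x) := by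
  intro u az au haz hau hazau haulast
  classical
  have hb : Function.Bijective σ0 := hσ0.1
  set φ : List (Swap (N+1)) := φ₀ ++ [τl] with hφ
  have hlen : φ.length = φ₀.length + 1 := by simp [hφ]
  have hlen0 : 0 < φ.length := by omega
  have htstar : φ.length - 1 = φ₀.length := by omega
  have htlt : φ₀.length < φ.length := by omega
  have hgetl : ∀ (h : φ₀.length < φ.length), φ[φ₀.length] = τl := fun h =>
    List.getElem_concat_length rfl h
  -- basic facts about time 0 positions
  have hz0 : SwapModel.posAt σ0 φ 0 z = az :=
    SwapModel.posAt_eq hb (show SwapModel.stepA σ0 φ 0 az = z from haz)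
  have hu0 : SwapModel.posAt σ0 φ 0 u = au :=
    SwapModel.posAt_eq hb (show SwapModel.stepA σ0 φ 0 au = u from hau)
  have hx0 : SwapModel.posAt σ0 φ 0 x = Fin.last N :=
    SwapModel.posAt_eq hb (show SwapModel.stepA σ0 φ 0 (Fin.last N) = x from hx)
  have haz' : az.val < au.val := hazau
  have hau' : au.val < N := by
    have := Fin.lt_def.mp haulast
    simpa [Fin.val_last] using this
  have huz : u ≠ z := by
    intro h; subst h
    have : az = au := hb.1 (by rw [haz, hau])
    omega
  have hux : u ≠ x := by
    intro h; subst h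
    have : au = Fin.last N := hb.1 (by rw [hau, hx])
    rw [this] at hau'
    simp [Fin.val_last] at hau'
  -- the admitted last swap
  have admτ : M.Admitted (SwapModel.stepA σ0 φ φ₀.length) τl := by
    have := SwapModel.valid_admitted M σ0 φ hvalid φ₀.length htlt
    rwa [hgetl htlt] at this
  -- positions just before the last swap
  obtain ⟨J, key1, key2, keyadj⟩ : ∃ J : Fin (N+1),
      SwapModel.posAt σ0 φ φ₀.length z = I ∧ SwapModel.posAt σ0 φ φ₀.length x = J ∧
        (I.val + 1 = J.val ∨ J.val + 1 = I.val) := by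
    have hadj := SwapModel.adj_vals hG admτ.2.2.1
    rcases hτl with ⟨h1, h2, h3⟩ | ⟨h1, h2, h3⟩
    · refine ⟨τl.a2, ?_, ?_, ?_⟩
      · apply SwapModel.posAt_eq hb
        rw [← h2, ← h1]; exact admτ.1
      · apply SwapModel.posAt_eq hb
        rw [← h3]; exact admτ.2.1
      · rw [← h1]; exact hadj
    · refine ⟨τl.a1, ?_, ?_, ?_⟩
      · apply SwapModel.posAt_eq hb
        rw [← h2, ← h1]; exact admτ.2.1
      · apply SwapModel.posAt_eq hb
        rw [← h3]; exact admτ.1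
      · rw [← h1]; omega
  -- the last swap exchanges z and x, hence not u with either
  have hlastuz : ∀ (h : φ.length - 1 < φ.length), ¬ (φ[φ.length - 1]).exchanges u z := by
    intro h hex
    have hg : φ[φ.length - 1]'h = τl := by
      have := hgetl htlt
      simp only [htstar]
      exact this
    rw [hg] at hex
    rcases hτl with ⟨h1, h2, h3⟩ | ⟨h1, h2, h3⟩ <;>
      rcases hex with ⟨e1, e2⟩ | ⟨e1, e2⟩ <;>
        first
          | exact huz (e1.symm.trans h2)
          | exact huz (e2.symm.trans h2)
          | exact hux (e1.symm.trans h3)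
          | exact hux (e2.symm.trans h3)
  have hlastux : ∀ (h : φ.length - 1 < φ.length), ¬ (φ[φ.length - 1]).exchanges u x := by
    intro h hex
    have hg : φ[φ.length - 1]'h = τl := by
      have := hgetl htlt
      simp only [htstar]
      exact this
    rw [hg] at hex
    rcases hτl with ⟨h1, h2, h3⟩ | ⟨h1, h2, h3⟩ <;>
      rcases hex with ⟨e1, e2⟩ | ⟨e1, e2⟩ <;>
        first
          | exact huz (e1.symm.trans h2)
          | exact huz (e2.symm.trans h2)
          | exact hux (e1.symm.trans h3)
          | exact hux (e2.symm.trans h3)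
  -- the two flip equivalences
  have hA := SwapModel.flip_iff M hG hb hvalid huz hlen0 hlastuz
  have hB := SwapModel.flip_iff M hG hb hvalid hux hlen0 hlastux
  rw [htstar, key1, hz0, hu0] at hA
  rw [htstar, key2, hu0, hx0] at hB
  set pu := SwapModel.posAt σ0 φ φ₀.length u with hpu
  have hpuI : pu.val ≠ I.val := by
    intro hv
    have : pu = SwapModel.posAt σ0 φ φ₀.length z := by rw [key1]; exact Fin.ext hv
    exact huz (SwapModel.posAt_inj hb this)
  have hpuJ : pu.val ≠ J.val := by
    intro hv
    have : pu = SwapModel.posAt σ0 φ φ₀.length x := by rw [key2]; exact Fin.ext hv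
    exact hux (SwapModel.posAt_inj hb this)
  have hNval : (Fin.last N).val = N := Fin.val_last N
  have hA' : (∃ τ ∈ φ, τ.exchanges u z) ↔ pu.val < I.val := by
    rw [hA]; omega
  have hB' : (∃ τ ∈ φ, τ.exchanges u x) ↔ ¬ (pu.val < J.val) := by
    rw [hB]; omega
  rcases Nat.lt_or_ge pu.val I.val with h | h
  · exact Or.inl ⟨hA'.mpr h, fun h2 => by have := hB'.mp h2; omega⟩
  · exact Or.inr ⟨hB'.mpr (by omega), fun h2 => by have := hA'.mp h2; omega⟩
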